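/- In an abelian category A, given objects X, Y and an epimorphism (f,g) : Z ↠ X ⊕ Y, there exist epimorphisms f' : X' ↠ X and g' : Y' ↠ Y such that the morphism (f',g') : X' ⊕ Y' → X ⊕ Y factors through Z. Specifically one may take X' = ker(g) and Y' = ker(f) with the induced maps. -/
import Mathlib

open CategoryTheory CategoryTheory.Limits CategoryTheory.Abelian
open CategoryTheory.Abelian.Pseudoelement

universe v u

lemma pseudo_id_apply {A : Type*} [Category A] [Abelian A] {X : A}
    (x : Pseudoelement X) : pseudoApply (𝟙 X) x = x := by
  induction x using Quotient.inductionOn with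
  | h a =>
    rw [pseudoApply_mk']
    exact Quotient.sound ⟨_, 𝟙 _, 𝟙 _, inferInstance, inferInstance, by simp⟩

lemma epi_restrict' {A : Type*} [Category A] [Abelian A]
    {Z X Y : A} (q : Z ⟶ X) (r : Z ⟶ Y) (hp : Epi (biprod.lift q r)) :
    Epi (kernel.ι r ≫ q) := by
  apply epi_of_pseudo_surjective
  intro x
  have : Epi (biprod.lift q r) := hp
  obtain ⟨z, hz⟩ := pseudo_surjective_of_epi (biprod.lift q r)
    (pseudoApply (biprod.inl : X ⟶ X ⊞ Y) x)
  have hz2 : pseudoApply r z = 0 := by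
    have : pseudoApply (biprod.lift q r ≫ biprod.snd) z
        = pseudoApply (biprod.inl ≫ (biprod.snd : X ⊞ Y ⟶ Y)) x := by
      rw [Pseudoelement.comp_apply, hz, Pseudoelement.comp_apply]
    simpa using this
  obtain ⟨a, ha⟩ := pseudo_exact_of_exact (CategoryTheory.ShortComplex.exact_kernel r) z hz2
  refine ⟨a, ?_⟩
  have h1 : pseudoApply (kernel.ι r ≫ biprod.lift q r) a
      = pseudoApply (biprod.inl : X ⟶ X ⊞ Y) x := by
    rw [Pseudoelement.comp_apply, ha, hz]
  have h2 : pseudoApply ((kernel.ι r ≫ biprod.lift q r) ≫ biprod.fst) a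
      = pseudoApply (biprod.inl ≫ (biprod.fst : X ⊞ Y ⟶ X)) x := by
    rw [Pseudoelement.comp_apply, h1, Pseudoelement.comp_apply]
  simp only [biprod.inl_fst] at h2
  rw [pseudo_id_apply] at h2
  simpa using h2

/-- in an abelian category, given an epimorphism `(f,g) : Z ↠ X ⊞ Y`, the
restrictions `f' : ker g ⟶ X` of `f` and `g' : ker f ⟶ Y` of `g` are epimorphisms, and the
morphism `(f',g') : ker g ⊞ ker f ⟶ X ⊞ Y` factors through `Z`. -/
theorem stmt9 {A : Type u} [Category.{v} A] [Abelian A]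
    {Z X Y : A} (p : Z ⟶ X ⊞ Y) (hp : Epi p) :
    Epi (kernel.ι (p ≫ biprod.snd) ≫ p ≫ biprod.fst) ∧
    Epi (kernel.ι (p ≫ biprod.fst) ≫ p ≫ biprod.snd) ∧
    ∃ h : kernel (p ≫ biprod.snd) ⊞ kernel (p ≫ biprod.fst) ⟶ Z,
      h ≫ p = biprod.map (kernel.ι (p ≫ biprod.snd) ≫ p ≫ biprod.fst)
        (kernel.ι (p ≫ biprod.fst) ≫ p ≫ biprod.snd) := by
  have hlift1 : biprod.lift (p ≫ biprod.fst) (p ≫ biprod.snd) = p := by ext <;> simp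
  have hlift2 : biprod.lift (p ≫ biprod.snd) (p ≫ biprod.fst)
      = p ≫ (biprod.braiding X Y).hom := by ext <;> simp
  refine ⟨?_, ?_, ?_⟩
  · exact epi_restrict' (p ≫ biprod.fst) (p ≫ biprod.snd) (by rwa [hlift1])
  · exact epi_restrict' (p ≫ biprod.snd) (p ≫ biprod.fst)
      (by rw [hlift2]; exact epi_comp _ _)
  · refine ⟨biprod.desc (kernel.ι (p ≫ biprod.snd)) (kernel.ι (p ≫ biprod.fst)), ?_⟩
    apply biprod.hom_ext' <;> apply biprod.hom_ext <;>
      simp only [biprod.inl_desc_assoc, biprod.inr_desc_assoc, biprod.inl_map,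
        biprod.inr_map, Category.assoc]
    · have := kernel.condition (p ≫ biprod.snd)
      simp [reassoc_of% this]
    · simp
    · simp
    · have := kernel.condition (p ≫ biprod.fst)
      simp [reassoc_of% this]
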